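/- arXiv:1710.09207 — 2 statements merged into one kernel-verified Lean document; each statement's English description precedes it below -/
import Mathlib

section
/- For any fixed real x, the map τ ↦ S_τ(x) = (1/τ)·log(1 + e^{τx}) is strictly decreasing on (0, ∞). -/
-- Key inequality: for a > 0 and r > 1, 1 + a^r < (1+a)^r.
lemma one_add_rpow_lt (a r : ℝ) (ha : 0 < a) (hr : 1 < r) :
    1 + a ^ r < (1 + a) ^ r := by
  have h1a : (0:ℝ) < 1 + a := by linarith
  have hr1 : 0 < r - 1 := by linarith
  have h1 : (1:ℝ) < (1 + a) ^ (r - 1) := by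
    exact (Real.one_lt_rpow_iff_of_pos h1a (y := r - 1)).mpr (Or.inl ⟨by linarith, hr1⟩)
  have h2 : a ^ (r - 1) < (1 + a) ^ (r - 1) :=
    Real.rpow_lt_rpow (le_of_lt ha) (by linarith) hr1
  have key : (1 + a) ^ r = (1 + a) ^ (r - 1) + a * (1 + a) ^ (r - 1) := by
    have : (1 + a) ^ r = (1 + a) ^ (r - 1) * (1 + a) := by
      rw [show r = (r - 1) + 1 by ring, Real.rpow_add h1a, Real.rpow_one]
      ring_nf
    rw [this]; ring
  have h3 : a * a ^ (r - 1) < a * (1 + a) ^ (r - 1) := by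
    exact mul_lt_mul_of_pos_left h2 ha
  have h4 : a * a ^ (r - 1) = a ^ r := by
    rw [show r = 1 + (r - 1) by ring, Real.rpow_add ha, Real.rpow_one]
    ring_nf
  rw [key]
  calc 1 + a ^ r < (1 + a) ^ (r - 1) + a ^ r := by linarith
    _ = (1 + a) ^ (r - 1) + a * a ^ (r - 1) := by rw [h4]
    _ < (1 + a) ^ (r - 1) + a * (1 + a) ^ (r - 1) := by linarith

theorem softplus_strictAnti_in_tau (x : ℝ) :
    StrictAntiOn (fun τ : ℝ => (1 / τ) * Real.log (1 + Real.exp (τ * x))) (Set.Ioi 0) := by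
  intro σ hσ τ hτ hst
  simp only [Set.mem_Ioi] at hσ hτ
  set a := Real.exp (σ * x) with ha_def
  have ha : 0 < a := Real.exp_pos _
  have hσne : σ ≠ 0 := ne_of_gt hσ
  have hr : 1 < τ / σ := (one_lt_div hσ).mpr hst
  have hexp : Real.exp (τ * x) = a ^ (τ / σ) := by
    rw [ha_def, ← Real.exp_mul]
    congr 1
    field_simp
  have key : 1 + Real.exp (τ * x) < (1 + a) ^ (τ / σ) := by
    rw [hexp]; exact one_add_rpow_lt a (τ / σ) ha hr
  have hpos : (0:ℝ) < 1 + Real.exp (τ * x) := by positivity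
  have hlog : Real.log (1 + Real.exp (τ * x)) < (τ / σ) * Real.log (1 + a) := by
    calc Real.log (1 + Real.exp (τ * x)) < Real.log ((1 + a) ^ (τ / σ)) :=
          Real.log_lt_log hpos key
      _ = (τ / σ) * Real.log (1 + a) := Real.log_rpow (by linarith) _
  have hgoal : Real.log (1 + Real.exp (τ * x)) / τ < Real.log (1 + a) / σ := by
    rw [div_lt_div_iff₀ hτ hσ]
    have h5 := mul_lt_mul_of_pos_right hlog hσ
    have h6 : τ / σ * Real.log (1 + a) * σ = Real.log (1 + a) * τ := by
      field_simp
    rw [h6] at h5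
    exact h5
  simp only [one_div, ha_def] at hgoal ⊢
  rw [inv_mul_eq_div, inv_mul_eq_div]
  exact hgoal
end

section
/- Fix h_1,…,h_n ∈ ℝ^m, λ > 0, τ > 0, and R ∈ ℝ. The SVDD smooth objective c ↦ F_τ(c, R) = R² + (1/(nλ))·Σ_{i=1}^n S_τ(‖h_i − c‖² − R²) is strictly convex in c whenever its Hessian Σ_i [2I(Ω_i + Ω_i²) + 4τΩ_i(c−h_i)(c−h_i)ᵀ]/(nλ(1+Ω_i)²) is positive definite, where Ω_i = e^{τ(‖h_i−c‖²−R²)}; in particular this Hessian is positive definite for every c ∈ ℝ^m. -/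
open Matrix

section Helpers

variable {k : ℕ}

lemma myPosDef_smul {a : ℝ} {M : Matrix (Fin k) (Fin k) ℝ} (ha : 0 < a) (hM : M.PosDef) :
    (a • M).PosDef := by
  rw [posDef_iff_dotProduct_mulVec]
  refine ⟨?_, fun x hx => ?_⟩
  · have h1 := hM.1
    unfold Matrix.IsHermitian at h1 ⊢
    rw [conjTranspose_smul, h1]
    simp
  · rw [smul_mulVec, dotProduct_smul, smul_eq_mul]
    exact mul_pos ha ((posDef_iff_dotProduct_mulVec.mp hM).2 hx)

lemma myPosSemidef_smul {a : ℝ} {M : Matrix (Fin k) (Fin k) ℝ} (ha : 0 ≤ a) (hM : M.PosSemidef) :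
    (a • M).PosSemidef := by
  rw [posSemidef_iff_dotProduct_mulVec]
  refine ⟨?_, fun x => ?_⟩
  · have h1 := hM.1
    unfold Matrix.IsHermitian at h1 ⊢
    rw [conjTranspose_smul, h1]
    simp
  · rw [smul_mulVec, dotProduct_smul, smul_eq_mul]
    exact mul_nonneg ha ((posSemidef_iff_dotProduct_mulVec.mp hM).2 x)

lemma myPosSemidef_vecMulVec (v : Fin k → ℝ) : (vecMulVec v v).PosSemidef := by
  rw [posSemidef_iff_dotProduct_mulVec]
  refine ⟨?_, fun x => ?_⟩
  · ext i j
    simp [Matrix.conjTranspose_apply, vecMulVec_apply, mul_comm]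
  · have : star x ⬝ᵥ (vecMulVec v v *ᵥ x) = (∑ i, v i * x i) * (∑ i, v i * x i) := by
      simp only [dotProduct, Matrix.mulVec, vecMulVec_apply, Pi.star_apply, star_trivial]
      rw [Finset.sum_mul]
      refine Finset.sum_congr rfl fun i _ => ?_
      rw [Finset.mul_sum, Finset.mul_sum]
      refine Finset.sum_congr rfl fun j _ => by ring
    rw [this]
    exact mul_self_nonneg _

lemma myPosDef_one : (1 : Matrix (Fin k) (Fin k) ℝ).PosDef := by
  rw [posDef_iff_dotProduct_mulVec]
  refine ⟨Matrix.isHermitian_one, fun x hx => ?_⟩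
  rw [one_mulVec]
  have : star x ⬝ᵥ x = ∑ i, x i ^ 2 := by
    simp [dotProduct, sq]
  rw [this]
  obtain ⟨i, hi⟩ := Function.ne_iff.mp hx
  exact Finset.sum_pos' (fun j _ => sq_nonneg _)
    ⟨i, Finset.mem_univ i, lt_of_le_of_ne (sq_nonneg _) (Ne.symm (pow_ne_zero 2 hi))⟩

end Helpers

theorem svdd_hessian_posdef_and_strictConvex (m n : ℕ) (hn : 1 ≤ n)
    (h : Fin n → (Fin m → ℝ)) (lam τ R : ℝ) (hlam : 0 < lam) (hτ : 0 < τ) :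
    (∀ c : Fin m → ℝ,
      ((1 / (n * lam)) • ∑ i : Fin n,
        ((1 + Real.exp (τ * ((∑ j, (h i j - c j) ^ 2) - R ^ 2))) ^ 2)⁻¹ •
          ((2 * (Real.exp (τ * ((∑ j, (h i j - c j) ^ 2) - R ^ 2)) +
              Real.exp (τ * ((∑ j, (h i j - c j) ^ 2) - R ^ 2)) ^ 2)) •
                (1 : Matrix (Fin m) (Fin m) ℝ) +
            (4 * τ * Real.exp (τ * ((∑ j, (h i j - c j) ^ 2) - R ^ 2))) •
              Matrix.vecMulVec (c - h i) (c - h i))).PosDef) ∧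
    StrictConvexOn ℝ Set.univ
      (fun c : Fin m → ℝ =>
        R ^ 2 + (1 / (n * lam)) * ∑ i : Fin n,
          (1 / τ) * Real.log
            (1 + Real.exp (τ * ((∑ j, (h i j - c j) ^ 2) - R ^ 2)))) := by
  have hn' : (0 : ℝ) < n := by exact_mod_cast hn
  have hk : (0 : ℝ) < 1 / (n * lam) := by positivity
  constructor
  · -- Positive definiteness
    intro c
    set Ω : Fin n → ℝ := fun i => Real.exp (τ * ((∑ j, (h i j - c j) ^ 2) - R ^ 2)) with hΩ
    have hT : ∀ i : Fin n,
        (((1 + Ω i) ^ 2)⁻¹ •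
          ((2 * (Ω i + Ω i ^ 2)) • (1 : Matrix (Fin m) (Fin m) ℝ) +
            (4 * τ * Ω i) • Matrix.vecMulVec (c - h i) (c - h i))).PosDef := by
      intro i
      have hΩpos : 0 < Ω i := Real.exp_pos _
      refine myPosDef_smul (by positivity) ?_
      refine Matrix.PosDef.add_posSemidef ?_ ?_
      · exact myPosDef_smul (by positivity) myPosDef_one
      · exact myPosSemidef_smul (by positivity) (myPosSemidef_vecMulVec _)
    refine myPosDef_smul hk ?_
    have i0 : Fin n := ⟨0, hn⟩
    rw [← Finset.sum_erase_add _ _ (Finset.mem_univ i0)]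
    refine Matrix.PosDef.posSemidef_add ?_ (hT i0)
    exact Finset.sum_induction _ Matrix.PosSemidef
      (fun a b ha hb => Matrix.PosSemidef.add ha hb) Matrix.PosSemidef.zero
      (fun i _ => (hT i).posSemidef)
  · -- Strict convexity
    -- the scalar function g
    set g : ℝ → ℝ := fun t => (1 / τ) * Real.log (1 + Real.exp (τ * t)) with hg
    have hgmono : StrictMono g := by
      intro a b hab
      have h1 : (0 : ℝ) < 1 + Real.exp (τ * a) := by positivity
      have h2 : Real.exp (τ * a) < Real.exp (τ * b) :=
        Real.exp_lt_exp.mpr (by exact mul_lt_mul_of_pos_left hab hτ)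
      exact mul_lt_mul_of_pos_left (Real.log_lt_log h1 (by linarith)) (by positivity)
    have hderiv : ∀ t : ℝ, HasDerivAt g (Real.exp (τ * t) / (1 + Real.exp (τ * t))) t := by
      intro t
      have h1 : HasDerivAt (fun s : ℝ => τ * s) τ t := by
        simpa using (hasDerivAt_id t).const_mul τ
      have h2 : HasDerivAt (fun s : ℝ => Real.exp (τ * s)) (Real.exp (τ * t) * τ) t :=
        (Real.hasDerivAt_exp _).comp t h1
      have h3 : HasDerivAt (fun s : ℝ => 1 + Real.exp (τ * s)) (Real.exp (τ * t) * τ) t :=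
        h2.const_add 1
      have h4 : HasDerivAt (fun s : ℝ => Real.log (1 + Real.exp (τ * s)))
          (Real.exp (τ * t) * τ / (1 + Real.exp (τ * t))) t :=
        h3.log (by positivity)
      have h5 := h4.const_mul (1 / τ)
      refine h5.congr_deriv ?_
      field_simp
    have hderiv_eq : deriv g = fun t => Real.exp (τ * t) / (1 + Real.exp (τ * t)) :=
      funext fun t => (hderiv t).deriv
    have hgconv : ConvexOn ℝ Set.univ g := by
      refine (StrictMono.strictConvexOn_univ_of_deriv ?_ ?_).convexOn
      · have hc : Continuous fun t : ℝ => 1 + Real.exp (τ * t) :=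
          continuous_const.add (Real.continuous_exp.comp (continuous_const.mul continuous_id))
        exact continuous_const.mul (hc.log (fun t => by positivity))
      · rw [hderiv_eq]
        intro a b hab
        have ha' : (0 : ℝ) < 1 + Real.exp (τ * a) := by positivity
        have hb' : (0 : ℝ) < 1 + Real.exp (τ * b) := by positivity
        rw [div_lt_div_iff₀ ha' hb']
        have h2 : Real.exp (τ * a) < Real.exp (τ * b) :=
          Real.exp_lt_exp.mpr (mul_lt_mul_of_pos_left hab hτ)
        nlinarith [Real.exp_pos (τ * a), Real.exp_pos (τ * b)]
    -- strict convexity of each quadratic q i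
    have hq : ∀ i : Fin n, StrictConvexOn ℝ Set.univ
        (fun c : Fin m → ℝ => (∑ j, (h i j - c j) ^ 2) - R ^ 2) := by
      intro i
      refine ⟨convex_univ, fun x _ y _ hxy a b ha hb hab => ?_⟩
      simp only [smul_eq_mul, Pi.add_apply, Pi.smul_apply]
      have key : ∀ j : Fin m, (h i j - (a * x j + b * y j)) ^ 2 =
          a * (h i j - x j) ^ 2 + b * (h i j - y j) ^ 2 - a * b * (x j - y j) ^ 2 := by
        intro j
        have hb' : b = 1 - a := by linarith
        subst hb'
        ring
      have hS : 0 < ∑ j, (x j - y j) ^ 2 := by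
        obtain ⟨j, hj⟩ := Function.ne_iff.mp hxy
        refine Finset.sum_pos' (fun j _ => sq_nonneg _) ⟨j, Finset.mem_univ j, ?_⟩
        exact lt_of_le_of_ne (sq_nonneg _) (Ne.symm (pow_ne_zero 2 (sub_ne_zero.mpr hj)))
      have hsum : (∑ j, (h i j - (a * x j + b * y j)) ^ 2) =
          a * (∑ j, (h i j - x j) ^ 2) + b * (∑ j, (h i j - y j) ^ 2)
            - a * b * (∑ j, (x j - y j) ^ 2) := by
        rw [Finset.mul_sum, Finset.mul_sum, Finset.mul_sum, ← Finset.sum_add_distrib,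
          ← Finset.sum_sub_distrib]
        exact Finset.sum_congr rfl fun j _ => key j
      rw [hsum]
      nlinarith [mul_pos (mul_pos ha hb) hS]
    -- strict convexity of each composed term
    have hφ : ∀ i : Fin n, StrictConvexOn ℝ Set.univ
        (fun c : Fin m → ℝ =>
          (1 / τ) * Real.log (1 + Real.exp (τ * ((∑ j, (h i j - c j) ^ 2) - R ^ 2)))) := by
      intro i
      refine ⟨convex_univ, fun x _ y _ hxy a b ha hb hab => ?_⟩
      have h1 := (hq i).2 (Set.mem_univ x) (Set.mem_univ y) hxy ha hb hab
      have h2 := hgconv.2 (Set.mem_univ ((∑ j, (h i j - x j) ^ 2) - R ^ 2))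
        (Set.mem_univ ((∑ j, (h i j - y j) ^ 2) - R ^ 2)) ha.le hb.le hab
      simp only [smul_eq_mul] at h1 h2 ⊢
      calc g ((∑ j, (h i j - (a • x + b • y) j) ^ 2) - R ^ 2)
          < g (a * ((∑ j, (h i j - x j) ^ 2) - R ^ 2)
              + b * ((∑ j, (h i j - y j) ^ 2) - R ^ 2)) := hgmono h1
        _ ≤ a * g ((∑ j, (h i j - x j) ^ 2) - R ^ 2)
              + b * g ((∑ j, (h i j - y j) ^ 2) - R ^ 2) := h2
    -- assemble
    refine ⟨convex_univ, fun x _ y _ hxy a b ha hb hab => ?_⟩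
    have hne : (Finset.univ : Finset (Fin n)).Nonempty := ⟨⟨0, hn⟩, Finset.mem_univ _⟩
    set φm : Fin n → ℝ := fun i =>
      (1 / τ) * Real.log (1 + Real.exp (τ * ((∑ j, (h i j - (a • x + b • y) j) ^ 2) - R ^ 2)))
      with hφm
    set φX : Fin n → ℝ := fun i =>
      (1 / τ) * Real.log (1 + Real.exp (τ * ((∑ j, (h i j - x j) ^ 2) - R ^ 2))) with hφX
    set φY : Fin n → ℝ := fun i =>
      (1 / τ) * Real.log (1 + Real.exp (τ * ((∑ j, (h i j - y j) ^ 2) - R ^ 2))) with hφY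
    have key : ∀ i : Fin n, φm i < a * φX i + b * φY i := by
      intro i
      have := (hφ i).2 (Set.mem_univ x) (Set.mem_univ y) hxy ha hb hab
      simpa [hφm, hφX, hφY, smul_eq_mul] using this
    have hsum : (∑ i, φm i) < a * (∑ i, φX i) + b * (∑ i, φY i) := by
      calc (∑ i, φm i) < ∑ i, (a * φX i + b * φY i) :=
            Finset.sum_lt_sum_of_nonempty hne (fun i _ => key i)
        _ = a * (∑ i, φX i) + b * (∑ i, φY i) := by
            rw [Finset.sum_add_distrib, Finset.mul_sum, Finset.mul_sum]
    simp only [smul_eq_mul]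
    have hb2 : b = 1 - a := by linarith
    subst hb2
    linarith [mul_lt_mul_of_pos_left hsum hk]
end
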